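/- arXiv:2207.01442 — 2 statements merged into one kernel-verified Lean document; each statement's English description precedes it below -/
import Mathlib

section
/- The bivariate q-Laguerre polynomial L_n^{(α)}(x,y) satisfies the q-partial differential equation D_x{L_n^{(α)}(x,y) - q^α L_n^{(α)}(qx,y)} = -q^{α+1} D_y{L_n^{(α)}(q²x, y)}, where D_x and D_y denote the q-derivative in x and y respectively. -/
open Finset

/-- q-shifted factorial (a;q)_n -/
noncomputable def qPoch (a q : ℝ) (n : ℕ) : ℝ := ∏ j ∈ Finset.range n, (1 - a * q ^ j)

/-- infinite q-shifted factorial (a;q)_∞ -/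
noncomputable def qPochInf (a q : ℝ) : ℝ := ∏' j : ℕ, (1 - a * q ^ j)

/-- q-binomial coefficient [n choose k]_q -/
noncomputable def qBinom (q : ℝ) (n k : ℕ) : ℝ :=
  qPoch q q n / (qPoch q q k * qPoch q q (n - k))

/-- q-derivative -/
noncomputable def Dq (q : ℝ) (f : ℝ → ℝ) (x : ℝ) : ℝ := (f x - f (q * x)) / x

/-- bivariate q-Laguerre polynomial L_n^{(α)}(x,y) -/
noncomputable def qLaguerre (q α : ℝ) (n : ℕ) (x y : ℝ) : ℝ :=
  ∑ k ∈ Finset.range (n + 1),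
    (-1 : ℝ) ^ k * qBinom q n k * (q ^ ((k : ℝ) ^ 2 + (k : ℝ) * α)) /
      qPoch (q ^ (α + 1)) q k * x ^ k * y ^ (n - k)

/-- bivariate little q-Jacobi polynomial p_n^{(α,β)}(x,y) -/
noncomputable def littleQJacobi (q a b : ℝ) (n : ℕ) (x y : ℝ) : ℝ :=
  ∑ k ∈ Finset.range (n + 1),
    (-1 : ℝ) ^ k * (q ^ (((k : ℝ) * ((k : ℝ) + 1 - 2 * (n : ℝ))) / 2)) * qBinom q n k *
      (qPoch (a * b * q ^ (n + 1)) q k / qPoch (a * q) q k) * x ^ k * y ^ (n - k)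

lemma one_sub_pow_ne {q : ℝ} (hq : 0 < q) (hq1 : q < 1) {j : ℕ} (hj : j ≠ 0) :
    (1:ℝ) - q ^ j ≠ 0 := by
  have h := pow_lt_one₀ hq.le hq1 hj
  intro h'; linarith

lemma qPoch_q_ne_zero {q : ℝ} (hq : 0 < q) (hq1 : q < 1) (m : ℕ) : qPoch q q m ≠ 0 := by
  unfold qPoch
  apply Finset.prod_ne_zero_iff.mpr
  intro j _
  have : q * q ^ j = q ^ (j+1) := by ring
  rw [this, sub_ne_zero]
  intro h'
  have := pow_lt_one₀ hq.le hq1 (Nat.succ_ne_zero j)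
  rw [← h'] at this; exact lt_irrefl _ this

lemma qPoch_alpha_ne_zero {q α : ℝ} (hq : 0 < q) (hq1 : q < 1) (hα : -1 < α) (m : ℕ) :
    qPoch (q ^ (α + 1)) q m ≠ 0 := by
  unfold qPoch
  apply Finset.prod_ne_zero_iff.mpr
  intro j _
  have h1 : q ^ (α+1) * q ^ j = q ^ (α + 1 + j) := by
    rw [← Real.rpow_natCast q j, ← Real.rpow_add hq]
  have hpos : (0:ℝ) < α + 1 + j := by
    have : (0:ℝ) ≤ j := Nat.cast_nonneg j
    linarith
  have h2 : q ^ (α + 1 + (j:ℝ)) < 1 := Real.rpow_lt_one hq.le hq1 hpos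
  rw [h1]; intro h'; linarith

lemma qBinom_succ {q : ℝ} (hq : 0 < q) (hq1 : q < 1) {n k : ℕ} (hk : k < n) :
    qBinom q n (k+1) = qBinom q n k * (1 - q ^ (n-k)) / (1 - q ^ (k+1)) := by
  have h1 : qPoch q q (k+1) = qPoch q q k * (1 - q ^ (k+1)) := by
    unfold qPoch; rw [Finset.prod_range_succ]; ring
  obtain ⟨m, hm⟩ : ∃ m, n - k = m + 1 := ⟨n - k - 1, by omega⟩
  have h2 : n - (k+1) = m := by omega
  have h3 : qPoch q q (n - k) = qPoch q q m * (1 - q ^ (n - k)) := by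
    rw [hm]; unfold qPoch; rw [Finset.prod_range_succ]; ring
  unfold qBinom
  rw [h1, h2, h3]
  have n1 := qPoch_q_ne_zero hq hq1 k
  have n2 := qPoch_q_ne_zero hq hq1 m
  have n3 : (1:ℝ) - q ^ (k+1) ≠ 0 := one_sub_pow_ne hq hq1 (Nat.succ_ne_zero k)
  have n4 : (1:ℝ) - q ^ (n-k) ≠ 0 := by rw [hm]; exact one_sub_pow_ne hq hq1 (Nat.succ_ne_zero m)
  field_simp

theorem qLaguerre_qPDE (q α : ℝ) (hq : 0 < q) (hq1 : q < 1) (hα : -1 < α)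
    (n : ℕ) (x y : ℝ) (hx : x ≠ 0) (hy : y ≠ 0) :
    Dq q (fun u => qLaguerre q α n u y - q ^ α * qLaguerre q α n (q * u) y) x
      = -q ^ (α + 1) * Dq q (fun v => qLaguerre q α n (q ^ 2 * x) v) y := by
  have hqne : q ≠ 0 := ne_of_gt hq
  unfold Dq
  rw [← mul_div_assoc, div_eq_div_iff hx hy]
  have hA : (qLaguerre q α n x y - q ^ α * qLaguerre q α n (q * x) y -
      (qLaguerre q α n (q * x) y - q ^ α * qLaguerre q α n (q * (q * x)) y)) * y =
      ∑ k ∈ Finset.range (n + 1),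
        (-1 : ℝ) ^ k * qBinom q n k * (q ^ ((k : ℝ) ^ 2 + (k : ℝ) * α)) /
          qPoch (q ^ (α + 1)) q k * ((1 - q ^ k) * (1 - q ^ α * q ^ k)) * x ^ k *
          y ^ (n - k) * y := by
    unfold qLaguerre
    simp only [Finset.mul_sum, ← Finset.sum_sub_distrib, Finset.sum_mul]
    refine Finset.sum_congr rfl fun k _ => ?_
    ring
  have hB : -q ^ (α + 1) *
      (qLaguerre q α n (q ^ 2 * x) y - qLaguerre q α n (q ^ 2 * x) (q * y)) * x =
      ∑ k ∈ Finset.range (n + 1),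
        -q ^ (α + 1) * ((-1 : ℝ) ^ k * qBinom q n k * (q ^ ((k : ℝ) ^ 2 + (k : ℝ) * α)) /
          qPoch (q ^ (α + 1)) q k * (q ^ (2 * k) * x ^ k) *
          ((1 - q ^ (n - k)) * y ^ (n - k))) * x := by
    unfold qLaguerre
    simp only [Finset.mul_sum, ← Finset.sum_sub_distrib, Finset.sum_mul]
    refine Finset.sum_congr rfl fun k _ => ?_
    ring
  rw [hA, hB, Finset.sum_range_succ' _ n, Finset.sum_range_succ, Nat.sub_self]
  norm_num
  rw [← Finset.sum_neg_distrib]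
  refine Finset.sum_congr rfl fun k hk => ?_
  have hk' : k < n := Finset.mem_range.mp hk
  obtain ⟨m, hm1, hm2⟩ : ∃ m, n - (k+1) = m ∧ n - k = m + 1 :=
    ⟨n - (k+1), rfl, by omega⟩
  have hE : (q : ℝ) ^ (((k:ℝ) + 1) ^ 2 + ((k:ℝ) + 1) * α) =
      q ^ ((k : ℝ) ^ 2 + (k : ℝ) * α) * (q ^ (2 * k + 1) * q ^ α) := by
    rw [← Real.rpow_natCast q (2 * k + 1), ← Real.rpow_add hq, ← Real.rpow_add hq]
    congr 1
    push_cast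
    ring
  have hP : qPoch (q ^ (α + 1)) q (k + 1) =
      qPoch (q ^ (α + 1)) q k * (1 - q ^ (α + 1) * q ^ k) := by
    unfold qPoch; rw [Finset.prod_range_succ]
  have hswap : (1:ℝ) - q ^ α * q ^ (k + 1) = 1 - q ^ (α + 1) * q ^ k := by
    rw [Real.rpow_add_one hqne]; ring
  have hQ : q ^ (α + 1) = q ^ α * q := Real.rpow_add_one hqne α
  have hPne : qPoch (q ^ (α + 1)) q k ≠ 0 := qPoch_alpha_ne_zero hq hq1 hα k
  have hfac : (1:ℝ) - q ^ (α + 1) * q ^ k ≠ 0 := by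
    have h1 : q ^ (α + 1) * q ^ k = q ^ (α + 1 + k) := by
      rw [← Real.rpow_natCast q k, ← Real.rpow_add hq]
    have hpos : (0:ℝ) < α + 1 + k := by
      have : (0:ℝ) ≤ k := Nat.cast_nonneg k
      linarith
    have h2 : q ^ (α + 1 + (k:ℝ)) < 1 := Real.rpow_lt_one hq.le hq1 hpos
    rw [h1]; intro h'; linarith
  have h1k : (1:ℝ) - q ^ (k + 1) ≠ 0 := one_sub_pow_ne hq hq1 (Nat.succ_ne_zero k)
  rw [hE, hP, hswap, qBinom_succ hq hq1 hk', hm1, hm2, hQ]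
  rw [hQ] at hPne hfac
  field_simp [hPne, hfac, h1k]
  ring
end

section
/- For 0 < q < 1, α > -1, and |t y| sufficiently small, Σ_{n=0}^∞ ((-1)^n q^{n(n-1)/2}/(q;q)_n) L_n^{(α)}(x,y) t^n = (ty;q)_∞ · Σ_{n=0}^∞ ( [(-1)^n q^{n(n-1)/2}]^3 / ((q^{α+1};q)_n (ty;q)_n (q;q)_n) ) · (-q^{α+1} x t)^n. -/
open Finset

open Filter

section helpers
variable {q : ℝ}

lemma qPoch_pos {a : ℝ} (hq : 0 < q) (hq1 : q < 1) (ha : a < 1) (n : ℕ) :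
    0 < qPoch a q n := by
  apply Finset.prod_pos
  intro j _
  have h1 : q ^ j ≤ 1 := pow_le_one₀ hq.le hq1.le
  have h2 : 0 < q ^ j := pow_pos hq j
  rcases le_or_gt a 0 with h | h
  · nlinarith
  · nlinarith

lemma qPoch_ne (hq : 0 < q) (hq1 : q < 1) {a : ℝ} (ha : a < 1) (n : ℕ) :
    qPoch a q n ≠ 0 := (qPoch_pos hq hq1 ha n).ne'

lemma qPoch_lower (hq : 0 < q) (hq1 : q < 1) {a : ℝ} (ha : |a| < 1) (n : ℕ) :
    (1 - |a|) ^ n ≤ qPoch a q n := by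
  rw [qPoch]
  have h := Finset.prod_le_prod (s := Finset.range n) (f := fun _ => 1 - |a|)
    (g := fun j => 1 - a * q ^ j) ?_ ?_
  · simpa using h
  · intro j _; linarith
  · intro j _
    have h1 : q ^ j ≤ 1 := pow_le_one₀ hq.le hq1.le
    have h2 : 0 < q ^ j := pow_pos hq j
    have : a * q ^ j ≤ |a| := by
      calc a * q ^ j ≤ |a| * q ^ j := by nlinarith [le_abs_self a]
        _ ≤ |a| * 1 := by nlinarith [abs_nonneg a]
        _ = |a| := mul_one _
    linarith

lemma qPoch_succ (a : ℝ) (n : ℕ) :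
    qPoch a q (n + 1) = qPoch a q n * (1 - a * q ^ n) := Finset.prod_range_succ _ _

lemma qq_lower (hq : 0 < q) (hq1 : q < 1) (n : ℕ) : (1 - q) ^ n ≤ qPoch q q n := by
  have := qPoch_lower hq hq1 (a := q) (by rwa [abs_of_pos hq]) n
  rwa [abs_of_pos hq] at this

lemma tri_add (k m : ℕ) :
    (k + m) * ((k + m) - 1) / 2 = k * (k - 1) / 2 + m * (m - 1) / 2 + k * m := by
  induction m with
  | zero => simp
  | succ m ih =>
    have h1 : k + (m + 1) = (k + m) + 1 := by ring
    rw [h1, Nat.triangle_succ, ih, Nat.triangle_succ]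
    ring

lemma summable_qA (hq : 0 < q) (hq1 : q < 1) {A : ℝ} (hA : 0 ≤ A) :
    Summable (fun k : ℕ => q ^ (k * (k - 1) / 2) * A ^ k) := by
  apply summable_of_ratio_norm_eventually_le (r := 1 / 2) (by norm_num)
  have h0 : Tendsto (fun k : ℕ => q ^ k * A) atTop (nhds 0) := by
    simpa using (tendsto_pow_atTop_nhds_zero_of_lt_one hq.le hq1).mul_const A
  filter_upwards [h0.eventually_le_const (by norm_num : (0:ℝ) < 1/2),
    eventually_ge_atTop 1] with k hk hk1
  have he : (k + 1) * (k + 1 - 1) / 2 = k * (k - 1) / 2 + k := Nat.triangle_succ k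
  rw [Real.norm_eq_abs, Real.norm_eq_abs, he, pow_add]
  have h3 : 0 ≤ q ^ (k * (k - 1) / 2) * A ^ k := by positivity
  rw [abs_of_nonneg (by positivity), abs_of_nonneg h3]
  calc q ^ (k * (k - 1) / 2) * q ^ k * A ^ (k + 1)
      = (q ^ k * A) * (q ^ (k * (k - 1) / 2) * A ^ k) := by ring
    _ ≤ (1/2) * (q ^ (k * (k - 1) / 2) * A ^ k) := by
        apply mul_le_mul_of_nonneg_right hk h3

end helpers

noncomputable def eT (q z : ℝ) (m : ℕ) : ℝ :=
  (-1) ^ m * q ^ (m * (m - 1) / 2) * z ^ m / qPoch q q m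

noncomputable def eF (q z : ℝ) : ℝ := ∑' m, eT q z m

section euler
variable {q : ℝ}

lemma eT_abs_le (hq : 0 < q) (hq1 : q < 1) (z : ℝ) (m : ℕ) :
    |eT q z m| ≤ q ^ (m * (m - 1) / 2) * (|z| / (1 - q)) ^ m := by
  have hpos := qPoch_pos hq hq1 (a := q) hq1 m
  have hge := qq_lower hq hq1 m
  have h1q : (0:ℝ) < 1 - q := by linarith
  have habs : |eT q z m| = q ^ (m * (m - 1) / 2) * |z| ^ m / qPoch q q m := by
    rw [eT, abs_div, abs_of_pos hpos, abs_mul, abs_mul, abs_pow, abs_pow, abs_pow, abs_neg,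
      abs_one, one_pow, one_mul, abs_of_pos hq]
  rw [habs, div_pow, mul_div_assoc]
  gcongr

lemma summable_eT (hq : 0 < q) (hq1 : q < 1) (z : ℝ) : Summable (eT q z) := by
  have h1q : (0:ℝ) < 1 - q := by linarith
  apply Summable.of_abs
  apply Summable.of_nonneg_of_le (fun m => abs_nonneg _) (eT_abs_le hq hq1 z)
  exact summable_qA hq hq1 (by positivity)

lemma eT_zero (q z : ℝ) : eT q z 0 = 1 := by simp [eT, qPoch]

lemma eT_succ (hq : 0 < q) (hq1 : q < 1) (z : ℝ) (m : ℕ) :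
    eT q z (m + 1) = eT q (q * z) (m + 1) - z * eT q (q * z) m := by
  have hm := qPoch_ne hq hq1 (a := q) hq1 m
  have hm1 := qPoch_ne hq hq1 (a := q) hq1 (m + 1)
  rw [eT, eT, eT, Nat.triangle_succ, qPoch_succ, mul_pow, mul_pow]
  have hqm : (1 : ℝ) - q * q ^ m ≠ 0 := by
    have h1 : q ^ m ≤ 1 := pow_le_one₀ hq.le hq1.le
    have h2 : 0 < q ^ m := pow_pos hq m
    nlinarith
  field_simp
  ring

lemma eF_funeq (hq : 0 < q) (hq1 : q < 1) (z : ℝ) :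
    eF q z = (1 - z) * eF q (q * z) := by
  have hs := summable_eT hq hq1 z
  have hs' := summable_eT hq hq1 (q * z)
  have hshift : Summable (fun m => eT q (q * z) (m + 1)) :=
    (summable_nat_add_iff 1).2 hs'
  have hmul : Summable (fun m => z * eT q (q * z) m) := hs'.mul_left z
  calc eF q z = eT q z 0 + ∑' m, eT q z (m + 1) := Summable.tsum_eq_zero_add hs
    _ = 1 + ∑' m, (eT q (q * z) (m + 1) - z * eT q (q * z) m) := by
        rw [eT_zero]; congr 1; exact tsum_congr fun m => eT_succ hq hq1 z m
    _ = 1 + (∑' m, eT q (q * z) (m + 1) - ∑' m, z * eT q (q * z) m) := by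
        rw [Summable.tsum_sub hshift hmul]
    _ = 1 + ((eF q (q * z) - eT q (q * z) 0) - z * eF q (q * z)) := by
        rw [tsum_mul_left]
        congr 2
        have := Summable.tsum_eq_zero_add hs'
        rw [eF, this]; ring
    _ = (1 - z) * eF q (q * z) := by rw [eT_zero]; ring

lemma eF_prod (hq : 0 < q) (hq1 : q < 1) (z : ℝ) (N : ℕ) :
    eF q z = qPoch z q N * eF q (q ^ N * z) := by
  induction N with
  | zero => simp [qPoch]
  | succ N ih =>
    rw [ih, qPoch_succ, eF_funeq hq hq1 (q ^ N * z)]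
    rw [show q * (q ^ N * z) = q ^ (N + 1) * z by ring]
    ring

lemma eF_tendsto_one (hq : 0 < q) (hq1 : q < 1) (z : ℝ) :
    Tendsto (fun N : ℕ => eF q (q ^ N * z)) atTop (nhds 1) := by
  have h1q : (0:ℝ) < 1 - q := by linarith
  have key : Tendsto (fun N : ℕ => ∑' m, eT q (q ^ N * z) m) atTop
      (nhds (∑' m, eT q 0 m)) := by
    apply tendsto_tsum_of_dominated_convergence
      (bound := fun m => q ^ (m * (m - 1) / 2) * (|z| / (1 - q)) ^ m)
    · exact summable_qA hq hq1 (by positivity)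
    · intro m
      have hz : Tendsto (fun N : ℕ => q ^ N * z) atTop (nhds 0) := by
        simpa using (tendsto_pow_atTop_nhds_zero_of_lt_one hq.le hq1).mul_const z
      have hc : Continuous fun w : ℝ =>
          (-1 : ℝ) ^ m * q ^ (m * (m - 1) / 2) * w ^ m / qPoch q q m := by
        continuity
      have := (hc.tendsto 0).comp hz
      simpa [eT, Function.comp_def] using this
    · filter_upwards with N m
      calc |eT q (q ^ N * z) m|
          ≤ q ^ (m * (m - 1) / 2) * (|q ^ N * z| / (1 - q)) ^ m :=
            eT_abs_le hq hq1 _ m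
        _ ≤ q ^ (m * (m - 1) / 2) * (|z| / (1 - q)) ^ m := by
            have hb : |q ^ N * z| ≤ |z| := by
              rw [abs_mul, abs_pow, abs_of_pos hq]
              calc q ^ N * |z| ≤ 1 * |z| :=
                    mul_le_mul_of_nonneg_right (pow_le_one₀ hq.le hq1.le) (abs_nonneg z)
                _ = |z| := one_mul _
            gcongr
  have h0 : (∑' m, eT q 0 m) = 1 := by
    rw [tsum_eq_single 0 (fun m hm => by
      simp [eT, zero_pow hm])]
    exact eT_zero q 0
  rw [h0] at key
  exact key
end euler

section prodpart
variable {q : ℝ}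

lemma factor_pos (hq : 0 < q) (hq1 : q < 1) {z : ℝ} (hz : |z| < 1) (j : ℕ) :
    0 < 1 - z * q ^ j := by
  have h1 : q ^ j ≤ 1 := pow_le_one₀ hq.le hq1.le
  have h2 : 0 < q ^ j := pow_pos hq j
  have : z * q ^ j ≤ |z| := by
    calc z * q ^ j ≤ |z| * q ^ j := by nlinarith [le_abs_self z]
      _ ≤ |z| * 1 := by nlinarith [abs_nonneg z]
      _ = |z| := mul_one _
  linarith

lemma summable_log (hq : 0 < q) (hq1 : q < 1) {z : ℝ} (hz : |z| < 1) :
    Summable fun j : ℕ => Real.log (1 - z * q ^ j) := by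
  have h1z : (0:ℝ) < 1 - |z| := by linarith
  apply Summable.of_abs
  apply Summable.of_nonneg_of_le (fun j => abs_nonneg _)
    (f := fun j : ℕ => |z| / (1 - |z|) * q ^ j)
  · intro j
    set u := 1 - z * q ^ j with hu
    have hupos : 0 < u := factor_pos hq hq1 hz j
    have h2 : 0 < q ^ j := pow_pos hq j
    have h1 : q ^ j ≤ 1 := pow_le_one₀ hq.le hq1.le
    have hub : 1 - |z| ≤ u := by
      have : z * q ^ j ≤ |z| := by
        calc z * q ^ j ≤ |z| * q ^ j := by nlinarith [le_abs_self z]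
          _ ≤ |z| := by nlinarith [abs_nonneg z]
      rw [hu]; linarith
    have habsz : |z * q ^ j| = |z| * q ^ j := by rw [abs_mul, abs_pow, abs_of_pos hq]
    have hlogle : Real.log u ≤ |z| * q ^ j := by
      calc Real.log u ≤ u - 1 := Real.log_le_sub_one_of_pos hupos
        _ = -(z * q ^ j) := by rw [hu]; ring
        _ ≤ |z * q ^ j| := neg_le_abs _
        _ = |z| * q ^ j := habsz
    have hlogge : -(|z| * q ^ j / (1 - |z|)) ≤ Real.log u := by
      have h5 : Real.log u⁻¹ ≤ u⁻¹ - 1 := Real.log_le_sub_one_of_pos (by positivity)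
      rw [Real.log_inv] at h5
      have h6 : u⁻¹ - 1 = (1 - u) / u := by field_simp
      have h7 : (1 - u) / u ≤ |z| * q ^ j / (1 - |z|) := by
        rw [hu]
        have h8 : (1:ℝ) - (1 - z * q ^ j) = z * q ^ j := by ring
        rw [h8]
        rcases le_or_gt (z * q ^ j) 0 with h | h
        · apply le_trans (div_nonpos_of_nonpos_of_nonneg h hupos.le)
          positivity
        · apply div_le_div₀ (by positivity) _ h1z _
          · exact (le_abs_self _).trans (le_of_eq habsz)
          · rw [← hu]; exact hub
      linarith
    rw [abs_le]
    constructor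
    · calc -(|z| / (1 - |z|) * q ^ j) = -(|z| * q ^ j / (1 - |z|)) := by ring
        _ ≤ Real.log u := hlogge
    · calc Real.log u ≤ |z| * q ^ j := hlogle
        _ ≤ |z| * q ^ j / (1 - |z|) := by
            rw [le_div_iff₀ h1z]; nlinarith [abs_nonneg z, (pow_pos hq j).le, mul_nonneg (abs_nonneg z) (pow_pos hq j).le]
        _ = |z| / (1 - |z|) * q ^ j := by ring
  · exact (summable_geometric_of_lt_one hq.le hq1).mul_left _

lemma hasProd_qPochInf (hq : 0 < q) (hq1 : q < 1) {z : ℝ} (hz : |z| < 1) :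
    HasProd (fun j : ℕ => 1 - z * q ^ j) (qPochInf z q) := by
  have := (Real.multipliable_of_summable_log (fun j => factor_pos hq hq1 hz j)
    (summable_log hq hq1 hz)).hasProd
  exact this

lemma qPochInf_eq_eF (hq : 0 < q) (hq1 : q < 1) {z : ℝ} (hz : |z| < 1) :
    qPochInf z q = eF q z := by
  have h1 := (hasProd_qPochInf hq hq1 hz).tendsto_prod_nat
  have h2 : Tendsto (fun N : ℕ => qPoch z q N) atTop (nhds (eF q z)) := by
    have hne : ∀ᶠ N : ℕ in atTop, eF q (q ^ N * z) ≠ 0 := by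
      have := (eF_tendsto_one hq hq1 z).eventually_ne one_ne_zero
      exact this
    have hdiv : Tendsto (fun N : ℕ => eF q z / eF q (q ^ N * z)) atTop
        (nhds (eF q z)) := by
      have := (tendsto_const_nhds (x := eF q z) (f := atTop (α := ℕ))).div
        (eF_tendsto_one hq hq1 z) one_ne_zero
      simpa [Pi.div_def] using this
    apply hdiv.congr'
    filter_upwards [hne] with N hN
    rw [eF_prod hq hq1 z N, mul_div_assoc, div_self hN, mul_one]
  have h1' : Tendsto (fun N : ℕ => qPoch z q N) atTop (nhds (qPochInf z q)) := by
    apply h1.congr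
    intro N; rfl
  exact tendsto_nhds_unique h1' h2
end prodpart

noncomputable def uu (q α x t : ℝ) (k : ℕ) : ℝ :=
  q ^ (k * (k - 1) / 2) * q ^ ((k : ℝ) ^ 2 + (k : ℝ) * α) * x ^ k * t ^ k /
    (qPoch q q k * qPoch (q ^ (α + 1)) q k)

noncomputable def aa (q α x y t : ℝ) (n k : ℕ) : ℝ :=
  (-1 : ℝ) ^ n * q ^ (n * (n - 1) / 2) / qPoch q q n *
    ((-1 : ℝ) ^ k * qBinom q n k * (q ^ ((k : ℝ) ^ 2 + (k : ℝ) * α)) /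
      qPoch (q ^ (α + 1)) q k * x ^ k * y ^ (n - k)) * t ^ n

section main
variable {q α x y t : ℝ}

lemma step2 (hq : 0 < q) (hq1 : q < 1) (hα : -1 < α) (k m : ℕ) :
    aa q α x y t (k + m) k = uu q α x t k * eT q (q ^ k * (t * y)) m := by
  have hQ1 : (q : ℝ) ^ (α + 1) < 1 := Real.rpow_lt_one hq.le hq1 (by linarith)
  have h1 := qPoch_ne hq hq1 (a := q) hq1 (k + m)
  have h2 := qPoch_ne hq hq1 (a := q) hq1 k
  have h3 := qPoch_ne hq hq1 (a := q) hq1 m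
  have h4 := qPoch_ne hq hq1 hQ1 k
  have hs : ((-1:ℝ)) ^ (k * 2) = 1 := by rw [mul_comm, pow_mul, neg_one_sq, one_pow]
  rw [aa, uu, eT, qBinom, Nat.add_sub_cancel_left, tri_add k m]
  field_simp
  ring_nf
  rw [hs]
  ring

lemma two_cast_tri (n : ℕ) : ((n * (n - 1) : ℕ) : ℝ) = (n : ℝ) ^ 2 - n := by
  cases n with
  | zero => simp
  | succ m => push_cast [Nat.succ_sub_one]; ring

lemma hpow (hq : 0 < q) (n : ℕ) :
    ((q : ℝ) ^ (n * (n - 1) / 2)) ^ 2 * ((q : ℝ) ^ (α + 1)) ^ n =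
      q ^ ((n : ℝ) ^ 2 + (n : ℝ) * α) := by
  rw [← pow_mul, Nat.div_mul_cancel (Nat.even_mul_pred_self n).two_dvd,
    ← Real.rpow_natCast q (n * (n - 1)), ← Real.rpow_natCast ((q : ℝ) ^ (α + 1)) n,
    ← Real.rpow_mul hq.le, ← Real.rpow_add hq]
  congr 1
  rw [two_cast_tri]
  ring

lemma rhs_term (hq : 0 < q) (hq1 : q < 1) (hα : -1 < α) (hty : |t * y| < 1) (n : ℕ) :
    ((-1 : ℝ) ^ n * q ^ (n * (n - 1) / 2)) ^ 3 /
        (qPoch (q ^ (α + 1)) q n * qPoch (t * y) q n * qPoch q q n) *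
        (-q ^ (α + 1) * x * t) ^ n
      = uu q α x t n / qPoch (t * y) q n := by
  have hQ1 : (q : ℝ) ^ (α + 1) < 1 := Real.rpow_lt_one hq.le hq1 (by linarith)
  have h1 := qPoch_ne hq hq1 (a := q) hq1 n
  have h2 := qPoch_ne hq hq1 hQ1 n
  have h3 := qPoch_ne hq hq1 (lt_of_le_of_lt (le_abs_self _) hty) n
  have hneg : (-q ^ (α + 1) * x * t : ℝ) ^ n =
      (-1 : ℝ) ^ n * ((q : ℝ) ^ (α + 1)) ^ n * x ^ n * t ^ n := by
    rw [show (-q ^ (α + 1) * x * t : ℝ) = (-1) * (q ^ (α + 1)) * x * t by ring,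
      mul_pow, mul_pow, mul_pow]
  have hsq : ((-1 : ℝ) ^ n) ^ 2 = 1 := by
    rw [← pow_mul, mul_comm, pow_mul, neg_one_sq, one_pow]
  have hp := hpow (α := α) hq n
  rw [uu, hneg, mul_pow]
  rw [← hp, div_mul_eq_mul_div, div_div, div_eq_div_iff (mul_ne_zero (mul_ne_zero h2 h3) h1)
    (mul_ne_zero (mul_ne_zero h1 h2) h3)]
  linear_combination ((((-1:ℝ)^n)^2 + 1) * ((q ^ (n*(n-1)/2):ℝ)^3 * ((q:ℝ)^(α+1))^n *
      (x^n * t^n) * (qPoch q q n * qPoch (q^(α+1)) q n * qPoch (t*y) q n))) * hsq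
end main

section sumb
variable {q α x y t : ℝ}

lemma eT_abs_le' (hq : 0 < q) (hq1 : q < 1) (z : ℝ) (k m : ℕ) :
    |eT q (q ^ k * z) m| ≤ q ^ (m * (m - 1) / 2) * (|z| / (1 - q)) ^ m := by
  have h1q : (0:ℝ) < 1 - q := by linarith
  refine (eT_abs_le hq hq1 _ m).trans ?_
  have hb : |q ^ k * z| ≤ |z| := by
    rw [abs_mul, abs_pow, abs_of_pos hq]
    calc q ^ k * |z| ≤ 1 * |z| :=
          mul_le_mul_of_nonneg_right (pow_le_one₀ hq.le hq1.le) (abs_nonneg z)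
      _ = |z| := one_mul _
  gcongr

lemma uu_abs_le (hq : 0 < q) (hq1 : q < 1) (hα : -1 < α) (k : ℕ) :
    |uu q α x t k| ≤ q ^ (k * (k - 1) / 2) *
      (q ^ α * |x| * |t| / ((1 - q) * (1 - q ^ (α + 1)))) ^ k := by
  have h1q : (0:ℝ) < 1 - q := by linarith
  have hQpos : (0:ℝ) < q ^ (α + 1) := Real.rpow_pos_of_pos hq _
  have hQ1 : (q:ℝ) ^ (α + 1) < 1 := Real.rpow_lt_one hq.le hq1 (by linarith)
  have h1Q : (0:ℝ) < 1 - q ^ (α + 1) := by linarith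
  have hP1 := qPoch_pos (a := q) hq hq1 hq1 k
  have hP2 := qPoch_pos hq hq1 hQ1 k
  have hd1 := qq_lower hq hq1 k
  have hd2 : (1 - q ^ (α + 1)) ^ k ≤ qPoch (q ^ (α + 1)) q k := by
    have := qPoch_lower hq hq1 (a := q ^ (α + 1)) (by rwa [abs_of_pos hQpos]) k
    rwa [abs_of_pos hQpos] at this
  have hrpos : (0:ℝ) < q ^ ((k : ℝ) ^ 2 + (k : ℝ) * α) := Real.rpow_pos_of_pos hq _
  have habs : |uu q α x t k| = q ^ (k * (k - 1) / 2) * q ^ ((k : ℝ) ^ 2 + (k : ℝ) * α)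
      * |x| ^ k * |t| ^ k / (qPoch q q k * qPoch (q ^ (α + 1)) q k) := by
    rw [uu, abs_div, abs_mul, abs_mul, abs_mul, abs_pow, abs_pow, abs_pow,
      abs_of_pos hq, abs_of_pos hrpos, abs_of_pos (mul_pos hP1 hP2)]
  have hr : q ^ ((k : ℝ) ^ 2 + (k : ℝ) * α) ≤ ((q:ℝ) ^ α) ^ k := by
    rw [Real.rpow_add hq]
    have h1 : q ^ ((k : ℝ) ^ 2) ≤ 1 := Real.rpow_le_one hq.le hq1.le (by positivity)
    have h2 : q ^ ((k : ℝ) * α) = ((q:ℝ) ^ α) ^ k := by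
      rw [mul_comm, Real.rpow_mul hq.le, Real.rpow_natCast]
    calc q ^ ((k : ℝ) ^ 2) * q ^ ((k : ℝ) * α) ≤ 1 * q ^ ((k : ℝ) * α) := by
          exact mul_le_mul_of_nonneg_right h1 (Real.rpow_pos_of_pos hq _).le
      _ = ((q:ℝ) ^ α) ^ k := by rw [one_mul, h2]
  rw [habs]
  calc q ^ (k * (k - 1) / 2) * q ^ ((k : ℝ) ^ 2 + (k : ℝ) * α) * |x| ^ k * |t| ^ k /
        (qPoch q q k * qPoch (q ^ (α + 1)) q k)
      ≤ q ^ (k * (k - 1) / 2) * ((q:ℝ) ^ α) ^ k * |x| ^ k * |t| ^ k /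
        ((1 - q) ^ k * (1 - q ^ (α + 1)) ^ k) := by gcongr <;> positivity
    _ = q ^ (k * (k - 1) / 2) *
        (q ^ α * |x| * |t| / ((1 - q) * (1 - q ^ (α + 1)))) ^ k := by
        rw [div_pow, mul_pow, mul_pow, mul_pow]
        field_simp

lemma summable_FF (hq : 0 < q) (hq1 : q < 1) (hα : -1 < α) :
    Summable (fun p : ℕ × ℕ => uu q α x t p.1 * eT q (q ^ p.1 * (t * y)) p.2) := by
  have h1q : (0:ℝ) < 1 - q := by linarith
  have hQ1 : (q:ℝ) ^ (α + 1) < 1 := Real.rpow_lt_one hq.le hq1 (by linarith)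
  have h1Q : (0:ℝ) < 1 - q ^ (α + 1) := by linarith
  set A := q ^ α * |x| * |t| / ((1 - q) * (1 - q ^ (α + 1))) with hA
  set B := |t * y| / (1 - q) with hB
  have hApos : 0 ≤ A := by
    rw [hA]; positivity
  have hBpos : 0 ≤ B := by rw [hB]; positivity
  apply Summable.of_abs
  apply Summable.of_nonneg_of_le (fun p => abs_nonneg _)
    (f := fun p : ℕ × ℕ => (q ^ (p.1 * (p.1 - 1) / 2) * A ^ p.1) *
      (q ^ (p.2 * (p.2 - 1) / 2) * B ^ p.2))
  · intro p
    rw [abs_mul]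
    exact mul_le_mul (uu_abs_le hq hq1 hα p.1) (eT_abs_le' hq hq1 _ p.1 p.2)
      (abs_nonneg _) (by positivity)
  · exact (summable_qA hq hq1 hApos).mul_of_nonneg (summable_qA hq hq1 hBpos)
      (fun k => by positivity) (fun m => by positivity)
end sumb

set_option maxHeartbeats 1000000 in
theorem qLaguerre_genfun_one (q α x y t : ℝ) (hq : 0 < q) (hq1 : q < 1) (hα : -1 < α)
    (hty : |t * y| < 1) :
    (∑' n : ℕ, (-1 : ℝ) ^ n * q ^ (n * (n - 1) / 2) / qPoch q q n *
        qLaguerre q α n x y * t ^ n)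
      = qPochInf (t * y) q *
        ∑' n : ℕ, ((-1 : ℝ) ^ n * q ^ (n * (n - 1) / 2)) ^ 3 /
          (qPoch (q ^ (α + 1)) q n * qPoch (t * y) q n * qPoch q q n) *
          (-q ^ (α + 1) * x * t) ^ n := by
  have hz1 : t * y < 1 := lt_of_le_of_lt (le_abs_self _) hty
  have hL1 : ∀ n, (-1 : ℝ) ^ n * q ^ (n * (n - 1) / 2) / qPoch q q n *
      qLaguerre q α n x y * t ^ n = ∑ k ∈ Finset.range (n + 1), aa q α x y t n k := by
    intro n
    rw [qLaguerre, Finset.mul_sum, Finset.sum_mul]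
    exact Finset.sum_congr rfl fun k _ => by rw [aa]
  have e_inj : Function.Injective (fun p : ℕ × ℕ => ((p.1 + p.2, p.1) : ℕ × ℕ)) := by
    intro p p' h
    simp only [Prod.mk.injEq] at h
    exact Prod.ext h.2 (by omega)
  have hGe : ∀ p : ℕ × ℕ,
      (if p.1 ≤ p.1 + p.2 then aa q α x y t (p.1 + p.2) p.1 else 0)
        = uu q α x t p.1 * eT q (q ^ p.1 * (t * y)) p.2 := by
    intro p
    rw [if_pos (Nat.le_add_right _ _)]
    exact step2 hq hq1 hα p.1 p.2
  have hFF := summable_FF (x := x) (y := y) (t := t) hq hq1 hα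
  have hsupp : ∀ p ∉ Set.range (fun p : ℕ × ℕ => ((p.1 + p.2, p.1) : ℕ × ℕ)),
      (if p.2 ≤ p.1 then aa q α x y t p.1 p.2 else 0) = 0 := by
    intro p hp
    rw [if_neg]
    intro hle
    exact hp ⟨(p.2, p.1 - p.2), Prod.ext (by simp; omega) (by simp)⟩
  have hGsum : Summable (fun p : ℕ × ℕ => if p.2 ≤ p.1 then aa q α x y t p.1 p.2 else 0) := by
    rw [← e_inj.summable_iff hsupp]
    exact hFF.congr fun p => (hGe p).symm
  have hkey : (∑' p : ℕ × ℕ, if p.2 ≤ p.1 then aa q α x y t p.1 p.2 else 0)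
      = ∑' p : ℕ × ℕ, uu q α x t p.1 * eT q (q ^ p.1 * (t * y)) p.2 := by
    rw [← e_inj.tsum_eq (Function.support_subset_iff'.2 hsupp)]
    exact tsum_congr hGe
  have hfiber : ∀ n : ℕ, (∑' k : ℕ, if k ≤ n then aa q α x y t n k else 0)
      = ∑ k ∈ Finset.range (n + 1), aa q α x y t n k := by
    intro n
    rw [tsum_eq_sum (s := Finset.range (n + 1))
      (fun k hk => if_neg (by simp at hk; omega))]
    exact Finset.sum_congr rfl fun k hk => if_pos (by simp at hk; omega)
  have hfib : ∀ k : ℕ, Summable (fun m : ℕ => uu q α x t k * eT q (q ^ k * (t * y)) m) :=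
    fun k => (summable_eT hq hq1 _).mul_left _
  have hstep : (∑' p : ℕ × ℕ, uu q α x t p.1 * eT q (q ^ p.1 * (t * y)) p.2)
      = ∑' k : ℕ, ∑' m : ℕ, uu q α x t k * eT q (q ^ k * (t * y)) m :=
    Summable.tsum_prod' hFF hfib
  calc (∑' n : ℕ, (-1 : ℝ) ^ n * q ^ (n * (n - 1) / 2) / qPoch q q n *
        qLaguerre q α n x y * t ^ n)
      = ∑' n : ℕ, ∑ k ∈ Finset.range (n + 1), aa q α x y t n k := tsum_congr hL1
    _ = ∑' n : ℕ, ∑' k : ℕ, (if k ≤ n then aa q α x y t n k else 0) :=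
        tsum_congr fun n => (hfiber n).symm
    _ = ∑' p : ℕ × ℕ, (if p.2 ≤ p.1 then aa q α x y t p.1 p.2 else 0) :=
        (Summable.tsum_prod' hGsum fun n => summable_of_ne_finset_zero
          (s := Finset.range (n + 1)) (fun k hk => if_neg (by simp at hk; omega))).symm
    _ = ∑' p : ℕ × ℕ, uu q α x t p.1 * eT q (q ^ p.1 * (t * y)) p.2 := hkey
    _ = ∑' k : ℕ, ∑' m : ℕ, uu q α x t k * eT q (q ^ k * (t * y)) m :=
        hstep
    _ = ∑' k : ℕ, uu q α x t k * eF q (q ^ k * (t * y)) :=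
        tsum_congr fun k => by rw [tsum_mul_left]; rfl
    _ = ∑' k : ℕ, eF q (t * y) * (uu q α x t k / qPoch (t * y) q k) := by
        apply tsum_congr
        intro k
        have hne := qPoch_ne hq hq1 hz1 k
        rw [eF_prod hq hq1 (t * y) k]
        field_simp
    _ = eF q (t * y) * ∑' k : ℕ, uu q α x t k / qPoch (t * y) q k := tsum_mul_left
    _ = qPochInf (t * y) q * ∑' k : ℕ, uu q α x t k / qPoch (t * y) q k := by
        rw [qPochInf_eq_eF hq hq1 hty]
    _ = qPochInf (t * y) q *
        ∑' n : ℕ, ((-1 : ℝ) ^ n * q ^ (n * (n - 1) / 2)) ^ 3 /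
          (qPoch (q ^ (α + 1)) q n * qPoch (t * y) q n * qPoch q q n) *
          (-q ^ (α + 1) * x * t) ^ n := by
        congr 1
        exact tsum_congr fun n => (rhs_term hq hq1 hα hty n).symm
end
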